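/- Let n ≥ 1 and let (A₀,B₀,C₀), (A₁,B₁,C₁) ∈ G(n). Then the following are equivalent: (1) (A₀,B₀,C₀) ⪯ (A₁,B₁,C₁) and (A₁,B₁,C₁) ⪯ (A₀,B₀,C₀); (2) A₁−C₁ = A₀−C₀ and B₁−B₀ is symmetric. -/

import Mathlib

open MeasureTheory Matrix Complex Filter Metric

noncomputable section

/-- The Gaussian function `θ(A,B,C)(x,y) =
  exp(−(x−y)ᵀA(x−y) − i·(x−y)ᵀB(x+y) − (x+y)ᵀC(x+y))`. -/
def theta {n : ℕ} (A B C : Matrix (Fin n) (Fin n) ℝ) (x y : Fin n → ℝ) : ℂ :=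
  Complex.exp (-((((x - y) ⬝ᵥ A.mulVec (x - y)) : ℝ) : ℂ)
    - Complex.I * ((((x - y) ⬝ᵥ B.mulVec (x + y)) : ℝ) : ℂ)
    - ((((x + y) ⬝ᵥ C.mulVec (x + y)) : ℝ) : ℂ))

/-- The integral operator of the kernel `κ` is positive semidefinite: for every
`f ∈ L²(ℝⁿ,ℂ)`, the integral `∬ κ(x,y) f(y) conj(f(x)) dy dx` is a nonnegative real. -/
def IsPosKernel {n : ℕ} (κ : (Fin n → ℝ) → (Fin n → ℝ) → ℂ) : Prop :=
  ∀ f : (Fin n → ℝ) → ℂ, MemLp f 2 volume →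
    0 ≤ (∫ x, ∫ y, κ x y * f y * (starRingEnd ℂ) (f x)).re ∧
      (∫ x, ∫ y, κ x y * f y * (starRingEnd ℂ) (f x)).im = 0

/-- Evaluation of a polynomial in `2n` variables with complex coefficients at real points. -/
def evalP {n : ℕ} (p : MvPolynomial (Fin n ⊕ Fin n) ℂ) (x y : Fin n → ℝ) : ℂ :=
  MvPolynomial.eval (Sum.elim (fun i => ((x i : ℝ) : ℂ)) (fun i => ((y i : ℝ) : ℂ))) p
/-- Membership in `G⁺(n)`: `A` and `C` are (symmetric) positive definite and the integral
operator of `θ(A,B,C)` is positive semidefinite. -/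
def GplusMem {n : ℕ} (A B C : Matrix (Fin n) (Fin n) ℝ) : Prop :=
  A.PosDef ∧ C.PosDef ∧ IsPosKernel (theta A B C)

/-- The preorder `(A₀,B₀,C₀) ⪯ (A₁,B₁,C₁)`. -/
def Prec {n : ℕ} (A₀ B₀ C₀ A₁ B₁ C₁ : Matrix (Fin n) (Fin n) ℝ) : Prop :=
  ∃ r : ℝ, 0 ≤ r ∧ GplusMem (A₁ - A₀ + r • 1) (B₁ - B₀) (C₁ - C₀ + r • 1)

private lemma pointwise_psd {n m : ℕ} (κ : (Fin n → ℝ) → (Fin n → ℝ) → ℂ)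
    (hcont : Continuous fun p : (Fin n → ℝ) × (Fin n → ℝ) => κ p.1 p.2)
    (hbdd : ∀ x y, ‖κ x y‖ ≤ 1) (hpos : IsPosKernel κ)
    (p : Fin m → Fin n → ℝ) (c : Fin m → ℂ) :
    0 ≤ (∑ b, ∑ a, c a * (starRingEnd ℂ) (c b) * κ (p b) (p a)).re ∧
      (∑ b, ∑ a, c a * (starRingEnd ℂ) (c b) * κ (p b) (p a)).im = 0 := by
  classical
  -- continuity of slices
  have hks : ∀ x, Continuous (κ x) := fun x => hcont.comp (Continuous.prodMk_right x)
  have hks' : ∀ y, Continuous (fun x => κ x y) := fun y =>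
    hcont.comp (continuous_id.prodMk continuous_const)
  set V : ℝ → ℝ := fun δ => (volume (closedBall (0 : Fin n → ℝ) δ)).toReal with hVdef
  have hVball : ∀ (a : Fin n → ℝ) (δ : ℝ), (volume (closedBall a δ)).toReal = V δ := by
    intro a δ; rw [Measure.addHaar_closedBall_center volume a δ]
  have hVpos : ∀ δ : ℝ, 0 < δ → 0 < V δ := by
    intro δ hδ
    exact ENNReal.toReal_pos (ne_of_gt (measure_closedBall_pos volume 0 hδ))
      (measure_closedBall_lt_top.ne)
  -- the inner set-integral function
  set T : Fin m → ℝ → (Fin n → ℝ) → ℂ := fun a δ x => ∫ y in closedBall (p a) δ, κ x y with hTdef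
  have hTcont : ∀ a δ, Continuous (T a δ) := by
    intro a δ
    apply continuous_of_dominated (bound := fun _ => (1:ℝ))
    · exact fun x => (hks x).aestronglyMeasurable.restrict
    · intro x
      filter_upwards with y using hbdd x y
    · exact integrableOn_const measure_closedBall_lt_top.ne
    · filter_upwards with y using (hks' y)
  have hTbdd : ∀ a δ x, ‖T a δ x‖ ≤ V δ := by
    intro a δ x
    calc ‖T a δ x‖ ≤ 1 * (volume (closedBall (p a) δ)).toReal :=
          norm_setIntegral_le_of_norm_le_const measure_closedBall_lt_top
            (fun y _ => hbdd x y)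
      _ = V δ := by rw [one_mul, hVball]
  -- the double set integral
  set J : Fin m → Fin m → ℝ → ℂ := fun a b δ => ∫ x in closedBall (p b) δ, T a δ x with hJdef
  -- test functions
  set ind : Fin m → ℝ → (Fin n → ℝ) → ℂ :=
    fun a δ => (closedBall (p a) δ).indicator (fun _ => (1:ℂ)) with hinddef
  set f : ℝ → (Fin n → ℝ) → ℂ := fun δ y => ∑ a, c a * ind a δ y with hfdef
  have hindmul : ∀ (g : (Fin n → ℝ) → ℂ) a δ (y : Fin n → ℝ),
      g y * ind a δ y = (closedBall (p a) δ).indicator g y := by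
    intro g a δ y
    by_cases hy : y ∈ closedBall (p a) δ <;> simp [hinddef, hy]
  have hindconj : ∀ a δ (y : Fin n → ℝ), (starRingEnd ℂ) (ind a δ y) = ind a δ y := by
    intro a δ y
    by_cases hy : y ∈ closedBall (p a) δ <;> simp [hinddef, hy]
  have hmem : ∀ δ, MemLp (f δ) 2 volume := by
    intro δ
    apply memLp_finset_sum
    intro a _
    exact (memLp_indicator_const 2 measurableSet_closedBall (1:ℂ)
      (Or.inr measure_closedBall_lt_top.ne)).const_mul (c a)
  -- integrability of slices times indicators
  have hint1 : ∀ δ x a, Integrable (fun y => κ x y * ind a δ y) volume := by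
    intro δ x a
    have : (fun y => κ x y * ind a δ y) = (closedBall (p a) δ).indicator (κ x) := by
      ext y; exact hindmul (κ x) a δ y
    rw [this]
    exact (((hks x).continuousOn).integrableOn_compact (isCompact_closedBall _ _)).integrable_indicator
      measurableSet_closedBall
  have hint2 : ∀ δ a b, Integrable (fun x => T a δ x * ind b δ x) volume := by
    intro δ a b
    have : (fun x => T a δ x * ind b δ x) = (closedBall (p b) δ).indicator (T a δ) := by
      ext x; exact hindmul (T a δ) b δ x
    rw [this]
    exact (((hTcont a δ).continuousOn).integrableOn_compact (isCompact_closedBall _ _)).integrable_indicator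
      measurableSet_closedBall
  -- Identity: the PSD integral equals the J-sum
  have hIdent : ∀ δ, (∫ x, ∫ y, κ x y * f δ y * (starRingEnd ℂ) (f δ x))
      = ∑ b, ∑ a, c a * (starRingEnd ℂ) (c b) * J a b δ := by
    intro δ
    have inner : ∀ x, (∫ y, κ x y * f δ y * (starRingEnd ℂ) (f δ x))
        = (∑ a, c a * T a δ x) * (starRingEnd ℂ) (f δ x) := by
      intro x
      rw [integral_mul_const]
      congr 1
      · have : (fun y => κ x y * f δ y) = (fun y => ∑ a, c a * (κ x y * ind a δ y)) := by
          ext y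
          rw [hfdef]
          simp only
          rw [Finset.mul_sum]
          congr 1; ext a; ring
        rw [this, integral_finset_sum _ (fun a _ => (hint1 δ x a).const_mul (c a))]
        congr 1; ext a
        rw [integral_const_mul]
        congr 1
        have : (fun y => κ x y * ind a δ y) = (closedBall (p a) δ).indicator (κ x) := by
          ext y; exact hindmul (κ x) a δ y
        rw [this, integral_indicator measurableSet_closedBall]
    simp_rw [inner]
    have expand : ∀ x, (∑ a, c a * T a δ x) * (starRingEnd ℂ) (f δ x)
        = ∑ b, ∑ a, (c a * (starRingEnd ℂ) (c b)) * (T a δ x * ind b δ x) := by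
      intro x
      rw [hfdef]
      simp only [map_sum, _root_.map_mul, hindconj]
      rw [Finset.sum_mul_sum]
      rw [Finset.sum_comm]
      congr 1; ext b; congr 1; ext a; ring
    simp_rw [expand]
    rw [integral_finset_sum _ (fun b _ => ?_)]
    · congr 1; ext b
      rw [integral_finset_sum _ (fun a _ => (hint2 δ a b).const_mul _)]
      congr 1; ext a
      rw [integral_const_mul]
      congr 1
      have : (fun x => T a δ x * ind b δ x) = (closedBall (p b) δ).indicator (T a δ) := by
        ext x; exact hindmul (T a δ) b δ x
      rw [this, integral_indicator measurableSet_closedBall]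
    · apply integrable_finset_sum
      intro a _
      exact (hint2 δ a b).const_mul _
  -- limit of normalized double averages
  have hlim : ∀ a b, Tendsto (fun δ : ℝ => (((V δ)^2)⁻¹ : ℝ) • J a b δ)
      (nhdsWithin 0 (Set.Ioi 0)) (nhds (κ (p b) (p a))) := by
    intro a b
    rw [Metric.tendsto_nhdsWithin_nhds]
    intro ε hε
    have hcA : ContinuousAt (fun q : (Fin n → ℝ) × (Fin n → ℝ) => κ q.1 q.2) (p b, p a) :=
      hcont.continuousAt
    rw [Metric.continuousAt_iff] at hcA
    obtain ⟨η, hη, hball⟩ := hcA (ε/2) (by linarith)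
    refine ⟨η/2, by linarith, ?_⟩
    intro δ hδ hdist
    have hδ0 : 0 < δ := hδ
    have hδη : δ < η := by
      rw [Real.dist_eq, sub_zero, abs_of_pos hδ0] at hdist
      linarith
    set κ0 := κ (p b) (p a) with hκ0
    -- pointwise estimate
    have hpt : ∀ x ∈ closedBall (p b) δ, ∀ y ∈ closedBall (p a) δ, ‖κ x y - κ0‖ ≤ ε/2 := by
      intro x hx y hy
      have : dist ((x, y) : (Fin n → ℝ) × (Fin n → ℝ)) (p b, p a) < η := by
        rw [Prod.dist_eq]
        rw [mem_closedBall] at hx hy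
        exact lt_of_le_of_lt (max_le hx hy) hδη
      have := hball this
      rw [dist_eq_norm] at this
      exact this.le
    -- inner estimate
    have hTest : ∀ x ∈ closedBall (p b) δ, ‖T a δ x - (V δ) • κ0‖ ≤ (ε/2) * V δ := by
      intro x hx
      have : T a δ x - (V δ) • κ0 = ∫ y in closedBall (p a) δ, (κ x y - κ0) := by
        rw [integral_sub (((hks x).continuousOn).integrableOn_compact (isCompact_closedBall _ _))
          (integrableOn_const measure_closedBall_lt_top.ne)]
        congr 1
        rw [setIntegral_const, measureReal_def, hVball]
      rw [this]
      calc ‖∫ y in closedBall (p a) δ, (κ x y - κ0)‖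
          ≤ (ε/2) * (volume (closedBall (p a) δ)).toReal :=
            norm_setIntegral_le_of_norm_le_const measure_closedBall_lt_top
              (fun y hy => hpt x hx y hy)
        _ = (ε/2) * V δ := by rw [hVball]
    -- outer estimate
    have hJest : ‖J a b δ - ((V δ)^2 : ℝ) • κ0‖ ≤ (ε/2) * (V δ)^2 := by
      have h1 : J a b δ - ((V δ)^2 : ℝ) • κ0
          = ∫ x in closedBall (p b) δ, (T a δ x - (V δ) • κ0) := by
        rw [integral_sub (((hTcont a δ).continuousOn).integrableOn_compact (isCompact_closedBall _ _))
          (integrableOn_const measure_closedBall_lt_top.ne)]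
        congr 1
        rw [setIntegral_const, measureReal_def, hVball, smul_smul]
        rw [pow_two]
      rw [h1]
      calc ‖∫ x in closedBall (p b) δ, (T a δ x - (V δ) • κ0)‖
          ≤ ((ε/2) * V δ) * (volume (closedBall (p b) δ)).toReal :=
            norm_setIntegral_le_of_norm_le_const measure_closedBall_lt_top
              (fun x hx => hTest x hx)
        _ = (ε/2) * (V δ)^2 := by rw [hVball]; ring
    have hVδ : 0 < V δ := hVpos δ hδ0
    have hV2 : (0:ℝ) < (V δ)^2 := by positivity
    rw [dist_eq_norm]
    have : (((V δ)^2)⁻¹ : ℝ) • J a b δ - κ0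
        = (((V δ)^2)⁻¹ : ℝ) • (J a b δ - ((V δ)^2 : ℝ) • κ0) := by
      rw [smul_sub, smul_smul, inv_mul_cancel₀ (ne_of_gt hV2), one_smul]
    rw [this, norm_smul]
    calc ‖(((V δ)^2)⁻¹ : ℝ)‖ * ‖J a b δ - ((V δ)^2 : ℝ) • κ0‖
        ≤ ((V δ)^2)⁻¹ * ((ε/2) * (V δ)^2) := by
          rw [Real.norm_eq_abs, abs_of_pos (by positivity)]
          exact mul_le_mul_of_nonneg_left hJest (by positivity)
      _ = ε/2 := by field_simp
      _ < ε := by linarith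
  -- assemble
  set L := ∑ b, ∑ a, c a * (starRingEnd ℂ) (c b) * κ (p b) (p a) with hL
  set G : ℝ → ℂ := fun δ => ∑ b, ∑ a, c a * (starRingEnd ℂ) (c b) * ((((V δ)^2)⁻¹ : ℝ) • J a b δ)
    with hG
  have hGlim : Tendsto G (nhdsWithin 0 (Set.Ioi 0)) (nhds L) := by
    rw [hL, hG]
    apply tendsto_finset_sum
    intro b _
    apply tendsto_finset_sum
    intro a _
    exact (hlim a b).const_mul _
  have hGval : ∀ δ ∈ Set.Ioi (0:ℝ), G δ = (((V δ)^2)⁻¹ : ℝ) •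
      (∫ x, ∫ y, κ x y * f δ y * (starRingEnd ℂ) (f δ x)) := by
    intro δ _
    rw [hIdent δ, Finset.smul_sum, hG]
    refine Finset.sum_congr rfl fun b _ => ?_
    rw [Finset.smul_sum]
    refine Finset.sum_congr rfl fun a _ => ?_
    rw [mul_smul_comm]
  have hGre : ∀ δ ∈ Set.Ioi (0:ℝ), 0 ≤ (G δ).re ∧ (G δ).im = 0 := by
    intro δ hδ
    obtain ⟨h1, h2⟩ := hpos (f δ) (hmem δ)
    rw [hGval δ hδ]
    rw [Complex.real_smul]
    constructor
    · rw [Complex.re_ofReal_mul]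
      exact mul_nonneg (by positivity) h1
    · rw [Complex.im_ofReal_mul, h2, mul_zero]
  have hre : Tendsto (fun δ => (G δ).re) (nhdsWithin 0 (Set.Ioi 0)) (nhds L.re) :=
    (Complex.continuous_re.tendsto L).comp hGlim
  have him : Tendsto (fun δ => (G δ).im) (nhdsWithin 0 (Set.Ioi 0)) (nhds L.im) :=
    (Complex.continuous_im.tendsto L).comp hGlim
  constructor
  · refine ge_of_tendsto hre ?_
    filter_upwards [self_mem_nhdsWithin] with δ hδ
    exact (hGre δ hδ).1
  · refine tendsto_nhds_unique ?_ him |>.symm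
    apply Tendsto.congr' ?_ tendsto_const_nhds
    filter_upwards [self_mem_nhdsWithin] with δ hδ
    exact ((hGre δ hδ).2).symm

private lemma cons_form {X : Type*} {N : ℕ} (k : X → X → ℂ) (x0 : X)
    (u : Fin N → X) (c : Fin N → ℂ) :
    (∑ b : Fin (N+1), ∑ a : Fin (N+1),
      (Fin.cons (-∑ i, c i) c : Fin (N+1) → ℂ) a
        * (starRingEnd ℂ) ((Fin.cons (-∑ i, c i) c : Fin (N+1) → ℂ) b)
        * k ((Fin.cons x0 u : Fin (N+1) → X) b) ((Fin.cons x0 u : Fin (N+1) → X) a))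
    = ∑ b, ∑ a, c a * (starRingEnd ℂ) (c b)
        * (k (u b) (u a) - k x0 (u a) - k (u b) x0 + k x0 x0) := by
  simp only [Fin.sum_univ_succ, Fin.cons_zero, Fin.cons_succ, map_neg, map_sum, neg_mul,
    mul_neg, neg_neg, mul_sub, mul_add, Finset.sum_sub_distrib, Finset.sum_add_distrib,
    Finset.mul_sum, Finset.sum_mul, Finset.sum_neg_distrib]
  ring_nf
  have h1 : (∑ x : Fin N, ∑ y : Fin N, c x * (starRingEnd ℂ) (c y) * k x0 x0)
      = ∑ x : Fin N, ∑ y : Fin N, c y * (starRingEnd ℂ) (c x) * k x0 x0 := Finset.sum_comm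
  have h2 : (∑ x : Fin N, ∑ y : Fin N, c x * (starRingEnd ℂ) (c y) * k x0 (u x))
      = ∑ x : Fin N, ∑ y : Fin N, c y * (starRingEnd ℂ) (c x) * k x0 (u y) := Finset.sum_comm
  have h3 : (∑ x : Fin N, ∑ y : Fin N, k x0 x0 * c y * (starRingEnd ℂ) (c x))
      = ∑ x : Fin N, ∑ y : Fin N, c y * (starRingEnd ℂ) (c x) * k x0 x0 :=
    Finset.sum_congr rfl fun _ _ => Finset.sum_congr rfl fun _ _ => by ring
  linear_combination h1 - h2 - h3

-- algebra helpers
private lemma dot_symm {n : ℕ} (S : Matrix (Fin n) (Fin n) ℝ) (hS : S.IsSymm) (x y : Fin n → ℝ) :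
    x ⬝ᵥ S.mulVec y = y ⬝ᵥ S.mulVec x := by
  rw [Matrix.dotProduct_mulVec, ← Matrix.mulVec_transpose, hS.eq, dotProduct_comm]

private def gfun {n : ℕ} (M S : Matrix (Fin n) (Fin n) ℝ) (t : Fin n → ℝ) : ℂ :=
  Complex.exp (-((2 * (t ⬝ᵥ M.mulVec t) : ℝ) : ℂ) - Complex.I * ((t ⬝ᵥ S.mulVec t : ℝ) : ℂ))

private lemma theta_factor {n : ℕ} (M S : Matrix (Fin n) (Fin n) ℝ) (hS : S.IsSymm) (x y : Fin n → ℝ) :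
    theta M S M x y = gfun M S x * (starRingEnd ℂ) (gfun M S y) := by
  have e1 : (x - y) ⬝ᵥ M.mulVec (x - y) + (x + y) ⬝ᵥ M.mulVec (x + y)
      = 2 * (x ⬝ᵥ M.mulVec x) + 2 * (y ⬝ᵥ M.mulVec y) := by
    simp only [Matrix.mulVec_add, Matrix.mulVec_sub, dotProduct_add,
      dotProduct_sub, sub_dotProduct, add_dotProduct]
    ring
  have e2 : (x - y) ⬝ᵥ S.mulVec (x + y) = x ⬝ᵥ S.mulVec x - y ⬝ᵥ S.mulVec y := by
    simp only [Matrix.mulVec_add, Matrix.mulVec_sub, dotProduct_add,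
      dotProduct_sub, sub_dotProduct, add_dotProduct]
    rw [dot_symm S hS x y]
    ring
  unfold theta gfun
  rw [← Complex.exp_conj, ← Complex.exp_add]
  congr 1
  rw [e2]
  have : ((x - y) ⬝ᵥ M.mulVec (x - y) : ℝ)
      = 2 * (x ⬝ᵥ M.mulVec x) + 2 * (y ⬝ᵥ M.mulVec y) - (x + y) ⬝ᵥ M.mulVec (x + y) := by
    linarith [e1]
  rw [this]
  simp only [map_sub, map_neg, _root_.map_mul, Complex.conj_ofReal, Complex.conj_I]
  push_cast
  ring

private lemma dot_self_pos {n : ℕ} {x : Fin n → ℝ} (hx : x ≠ 0) : 0 < x ⬝ᵥ x := by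
  have h0 : 0 ≤ x ⬝ᵥ x := Finset.sum_nonneg fun i _ => mul_self_nonneg (x i)
  rcases h0.lt_or_eq with h | h
  · exact h
  · exact absurd ((dotProduct_self_eq_zero).mp h.symm) hx

private lemma quad_bound {n : ℕ} (D : Matrix (Fin n) (Fin n) ℝ) (x : Fin n → ℝ) :
    |x ⬝ᵥ D.mulVec x| ≤ (∑ i, ∑ j, |D i j|) * (x ⬝ᵥ x) := by
  have key : ∀ i j : Fin n, |x i| * |x j| ≤ x ⬝ᵥ x := by
    intro i j
    have h1 : x i ^ 2 ≤ x ⬝ᵥ x := by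
      have := Finset.single_le_sum (f := fun k => x k * x k)
        (fun k _ => mul_self_nonneg (x k)) (Finset.mem_univ i)
      simpa [dotProduct, pow_two] using this
    have h2 : x j ^ 2 ≤ x ⬝ᵥ x := by
      have := Finset.single_le_sum (f := fun k => x k * x k)
        (fun k _ => mul_self_nonneg (x k)) (Finset.mem_univ j)
      simpa [dotProduct, pow_two] using this
    nlinarith [abs_nonneg (x i), abs_nonneg (x j), _root_.sq_abs (x i), _root_.sq_abs (x j),
      sq_nonneg (|x i| - |x j|)]
  calc |x ⬝ᵥ D.mulVec x| ≤ ∑ i, |x i * (D.mulVec x) i| :=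
        Finset.abs_sum_le_sum_abs _ _
    _ ≤ ∑ i, ∑ j, |D i j| * (x ⬝ᵥ x) := by
        apply Finset.sum_le_sum
        intro i _
        calc |x i * (D.mulVec x) i| = |x i| * |∑ j, D i j * x j| := by
              rw [abs_mul]; rfl
          _ ≤ |x i| * ∑ j, |D i j * x j| := by
              gcongr; exact Finset.abs_sum_le_sum_abs _ _
          _ = ∑ j, |D i j| * (|x i| * |x j|) := by
              rw [Finset.mul_sum]; congr 1; ext j; rw [abs_mul]; ring
          _ ≤ ∑ j, |D i j| * (x ⬝ᵥ x) := by
              apply Finset.sum_le_sum; intro j _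
              exact mul_le_mul_of_nonneg_left (key i j) (abs_nonneg _)
    _ = (∑ i, ∑ j, |D i j|) * (x ⬝ᵥ x) := by rw [Finset.sum_mul]; congr 1; ext i; rw [Finset.sum_mul]

private lemma posdef_add_big {n : ℕ} (D : Matrix (Fin n) (Fin n) ℝ) (hD : D.IsSymm) (r : ℝ)
    (hr : ∑ i, ∑ j, |D i j| < r) :
    (D + r • (1 : Matrix (Fin n) (Fin n) ℝ)).PosDef := by
  rw [Matrix.posDef_iff_dotProduct_mulVec]
  constructor
  · unfold Matrix.IsHermitian
    rw [Matrix.conjTranspose_eq_transpose_of_trivial, Matrix.transpose_add,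
      Matrix.transpose_smul, Matrix.transpose_one, hD.eq]
  · intro x hx
    have hS : 0 < x ⬝ᵥ x := dot_self_pos hx
    have hq := quad_bound D x
    have expand : x ⬝ᵥ (D + r • (1 : Matrix (Fin n) (Fin n) ℝ)).mulVec x
        = x ⬝ᵥ D.mulVec x + r * (x ⬝ᵥ x) := by
      rw [Matrix.add_mulVec, dotProduct_add, Matrix.smul_mulVec,
        Matrix.one_mulVec, dotProduct_smul, smul_eq_mul]
    have : star x = x := by simp
    rw [this, expand]
    have habs : -((∑ i, ∑ j, |D i j|) * (x ⬝ᵥ x)) ≤ x ⬝ᵥ D.mulVec x := neg_le_of_abs_le hq |>.trans_eq rfl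
    nlinarith

private lemma theta_cont {n : ℕ} (A B C : Matrix (Fin n) (Fin n) ℝ) :
    Continuous fun p : (Fin n → ℝ) × (Fin n → ℝ) => theta A B C p.1 p.2 := by
  unfold theta
  apply Complex.continuous_exp.comp
  have hdot : ∀ (M : Matrix (Fin n) (Fin n) ℝ) (u v : (Fin n → ℝ) × (Fin n → ℝ) → Fin n → ℝ),
      Continuous u → Continuous v →
      Continuous (fun p => (u p) ⬝ᵥ M.mulVec (v p)) := by
    intro M u v hu hv
    simp only [dotProduct, Matrix.mulVec]
    apply continuous_finset_sum
    intro i _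
    apply Continuous.mul ((continuous_apply i).comp hu)
    apply continuous_finset_sum
    intro j _
    exact (continuous_const.mul ((continuous_apply j).comp hv))
  have h1 : Continuous (fun p : (Fin n → ℝ) × (Fin n → ℝ) => p.1 - p.2) :=
    continuous_fst.sub continuous_snd
  have h2 : Continuous (fun p : (Fin n → ℝ) × (Fin n → ℝ) => p.1 + p.2) :=
    continuous_fst.add continuous_snd
  apply Continuous.sub
  apply Continuous.sub
  · exact (Complex.continuous_ofReal.comp (hdot A _ _ h1 h1)).neg
  · exact continuous_const.mul (Complex.continuous_ofReal.comp (hdot B _ _ h1 h2))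
  · exact Complex.continuous_ofReal.comp (hdot C _ _ h2 h2)

private lemma theta_bound {n : ℕ} {A C : Matrix (Fin n) (Fin n) ℝ} (B : Matrix (Fin n) (Fin n) ℝ)
    (hA : A.PosSemidef) (hC : C.PosSemidef) (x y : Fin n → ℝ) :
    ‖theta A B C x y‖ ≤ 1 := by
  unfold theta
  rw [Complex.norm_exp]
  have hre : (-((((x - y) ⬝ᵥ A.mulVec (x - y)) : ℝ) : ℂ)
      - Complex.I * ((((x - y) ⬝ᵥ B.mulVec (x + y)) : ℝ) : ℂ)
      - ((((x + y) ⬝ᵥ C.mulVec (x + y)) : ℝ) : ℂ)).re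
      = -((x - y) ⬝ᵥ A.mulVec (x - y)) - ((x + y) ⬝ᵥ C.mulVec (x + y)) := by
    simp
  rw [hre]
  have hA' := hA.dotProduct_mulVec_nonneg (x - y)
  have hC' := hC.dotProduct_mulVec_nonneg (x + y)
  simp only [star_trivial] at hA' hC'
  rw [Real.exp_le_one_iff]
  linarith

private def phi {n : ℕ} (A B C : Matrix (Fin n) (Fin n) ℝ) (x y : Fin n → ℝ) : ℂ :=
  (-((((x - y) ⬝ᵥ A.mulVec (x - y)) : ℝ) : ℂ)
    - Complex.I * ((((x - y) ⬝ᵥ B.mulVec (x + y)) : ℝ) : ℂ)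
    - ((((x + y) ⬝ᵥ C.mulVec (x + y)) : ℝ) : ℂ))

private lemma theta_eq_exp_phi {n : ℕ} (A B C : Matrix (Fin n) (Fin n) ℝ) (x y : Fin n → ℝ) :
    theta A B C x y = Complex.exp (phi A B C x y) := rfl

private lemma theta_smul {n : ℕ} (A B C : Matrix (Fin n) (Fin n) ℝ) (h : ℝ) (x y : Fin n → ℝ) :
    theta A B C (h • x) (h • y) = Complex.exp (((h^2 : ℝ) : ℂ) * phi A B C x y) := by
  unfold theta phi
  congr 1
  have key : ∀ (M : Matrix (Fin n) (Fin n) ℝ) (u v : Fin n → ℝ),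
      (h • u) ⬝ᵥ M.mulVec (h • v) = h^2 * (u ⬝ᵥ M.mulVec v) := by
    intro M u v
    rw [Matrix.mulVec_smul, dotProduct_smul, smul_dotProduct]
    simp [smul_eq_mul]; ring
  rw [show h • x - h • y = h • (x - y) by rw [smul_sub],
    show h • x + h • y = h • (x + y) by rw [smul_add]]
  rw [key A, key B, key C]
  push_cast
  ring

private lemma theta_zero {n : ℕ} (A B C : Matrix (Fin n) (Fin n) ℝ) :
    theta A B C 0 0 = 1 := by
  unfold theta
  simp

private lemma tend_exp (t : ℂ) :
    Tendsto (fun h : ℝ => ((h^2)⁻¹ : ℝ) • (Complex.exp (((h^2:ℝ):ℂ) * t) - 1))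
      (nhdsWithin 0 (Set.Ioi 0)) (nhds t) := by
  have hd : HasDerivAt (fun s : ℝ => Complex.exp (((s:ℝ):ℂ) * t)) t 0 := by
    have h1 : HasDerivAt (fun s : ℝ => ((s:ℝ):ℂ) * t) t 0 := by
      simpa using (Complex.ofRealCLM.hasDerivAt (x := (0:ℝ))).mul_const t
    simpa using h1.cexp
  have hslope : Tendsto (slope (fun s : ℝ => Complex.exp (((s:ℝ):ℂ) * t)) 0)
      (nhdsWithin 0 {(0:ℝ)}ᶜ) (nhds t) := hasDerivAt_iff_tendsto_slope.mp hd
  have hsq : Tendsto (fun h : ℝ => h^2) (nhdsWithin 0 (Set.Ioi 0)) (nhdsWithin 0 {(0:ℝ)}ᶜ) := by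
    apply tendsto_nhdsWithin_of_tendsto_nhds_of_eventually_within
    · have : Tendsto (fun h : ℝ => h^2) (nhds 0) (nhds 0) := by
        simpa using ((continuous_pow 2).tendsto (0:ℝ))
      exact this.mono_left nhdsWithin_le_nhds
    · filter_upwards [self_mem_nhdsWithin] with h hh
      simp only [Set.mem_compl_iff, Set.mem_singleton_iff]
      exact pow_ne_zero 2 (ne_of_gt hh)
  have := hslope.comp hsq
  convert this using 2 with h
  simp [slope_def_field, slope, Complex.real_smul]

private lemma rankone_pos {n : ℕ} (g : (Fin n → ℝ) → ℂ) :
    IsPosKernel (fun x y => g x * (starRingEnd ℂ) (g y)) := by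
  intro f hf
  have h1 : ∀ x : Fin n → ℝ, (∫ y, (g x * (starRingEnd ℂ) (g y)) * f y * (starRingEnd ℂ) (f x))
      = (g x * (starRingEnd ℂ) (f x)) * ∫ y, (starRingEnd ℂ) (g y) * f y := by
    intro x
    rw [← integral_const_mul]
    congr 1; ext y; ring
  have h2 : (∫ x, ∫ y, (g x * (starRingEnd ℂ) (g y)) * f y * (starRingEnd ℂ) (f x))
      = (∫ x, g x * (starRingEnd ℂ) (f x)) * ∫ y, (starRingEnd ℂ) (g y) * f y := by
    simp_rw [h1]
    rw [integral_mul_const]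
  have h3 : (∫ x, g x * (starRingEnd ℂ) (f x))
      = (starRingEnd ℂ) (∫ y, (starRingEnd ℂ) (g y) * f y) := by
    rw [← integral_conj]
    congr 1; ext y; simp [mul_comm]
  set z := ∫ y, (starRingEnd ℂ) (g y) * f y
  have h4 : (∫ x, ∫ y, (g x * (starRingEnd ℂ) (g y)) * f y * (starRingEnd ℂ) (f x))
      = ((Complex.normSq z : ℝ) : ℂ) := by
    rw [h2, h3, mul_comm, Complex.mul_conj]
  constructor
  · rw [h4]; simp [Complex.normSq_nonneg]
  · rw [h4]; simp

private lemma eval2 {n : ℕ} (M : Fin n → Fin n → ℂ) (a b : Fin n) (x y : ℂ) :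
    ∑ b', ∑ a', (Pi.single a x + Pi.single b y : Fin n → ℂ) a'
      * (starRingEnd ℂ) ((Pi.single a x + Pi.single b y : Fin n → ℂ) b') * M b' a'
    = x * (starRingEnd ℂ) x * M a a + y * (starRingEnd ℂ) x * M a b
      + x * (starRingEnd ℂ) y * M b a + y * (starRingEnd ℂ) y * M b b := by
  simp only [Pi.add_apply, map_add, Pi.single_apply, apply_ite (starRingEnd ℂ), map_zero,
    add_mul, mul_add, ite_mul, mul_ite, zero_mul, mul_zero, Finset.sum_add_distrib,
    Finset.sum_ite_eq', Finset.mem_univ, if_true, zero_add, add_zero]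
  simp only [Finset.sum_ite_irrel, Finset.sum_const_zero, Finset.sum_add_distrib,
    Finset.sum_ite_eq, Finset.sum_ite_eq', Finset.mem_univ, if_true]
  ring

private lemma form_zero_entries {n : ℕ} (M : Fin n → Fin n → ℂ)
    (h : ∀ c : Fin n → ℂ, ∑ b, ∑ a, c a * (starRingEnd ℂ) (c b) * M b a = 0) :
    ∀ b a, M b a = 0 := by
  have diag : ∀ a, M a a = 0 := by
    intro a
    have := h (Pi.single a 1)
    simpa [Pi.single_apply, ite_mul, mul_ite, apply_ite (starRingEnd ℂ),
      Finset.sum_ite_irrel, Finset.sum_const_zero,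
      Finset.sum_ite_eq', Finset.sum_ite_eq] using this
  intro b a
  have h1 := h (Pi.single a 1 + Pi.single b 1)
  have h2 := h (Pi.single a 1 + Pi.single b Complex.I)
  rw [eval2 M a b 1 1] at h1
  rw [eval2 M a b 1 Complex.I] at h2
  rw [diag a, diag b] at h1 h2
  simp only [_root_.map_one, Complex.conj_I, one_mul, mul_one, mul_zero, add_zero,
    zero_add] at h1 h2
  have hEq : M a b = M b a := by
    have h3 : Complex.I * (M a b - M b a) = 0 := by linear_combination h2
    rcases mul_eq_zero.mp h3 with h4 | h4
    · exact absurd h4 Complex.I_ne_zero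
    · linear_combination h4
  rw [hEq] at h1
  linear_combination h1 / 2

private lemma edot {n : ℕ} (M : Matrix (Fin n) (Fin n) ℝ) (i j : Fin n) :
    (Pi.single i 1 : Fin n → ℝ) ⬝ᵥ M.mulVec (Pi.single j 1) = M i j := by
  simp [dotProduct, Matrix.mulVec, Pi.single_apply, Finset.sum_ite_irrel,
    Finset.sum_const_zero, ite_mul, mul_ite, Finset.sum_ite_eq, Finset.sum_ite_eq']

private lemma Mm_entry {n : ℕ} (A B C : Matrix (Fin n) (Fin n) ℝ) (b a : Fin n) :
    phi A B C (Pi.single b 1) (Pi.single a 1) - phi A B C 0 (Pi.single a 1)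
      - phi A B C (Pi.single b 1) 0
    = ((A a b + A b a - C a b - C b a : ℝ) : ℂ)
      - Complex.I * ((B b a - B a b : ℝ) : ℂ) := by
  unfold phi
  simp only [zero_sub, sub_zero, zero_add, add_zero, Matrix.mulVec_sub, Matrix.mulVec_add,
    Matrix.mulVec_neg, dotProduct_sub, dotProduct_add, dotProduct_neg,
    sub_dotProduct, add_dotProduct, neg_dotProduct, neg_neg, edot]
  push_cast
  ring


private lemma form_psd {n : ℕ} (A B C : Matrix (Fin n) (Fin n) ℝ)
    (hA : A.PosDef) (hC : C.PosDef) (hker : IsPosKernel (theta A B C)) (c : Fin n → ℂ) :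
    0 ≤ (∑ b, ∑ a, c a * (starRingEnd ℂ) (c b) *
        (phi A B C (Pi.single b 1) (Pi.single a 1) - phi A B C 0 (Pi.single a 1)
          - phi A B C (Pi.single b 1) 0)).re ∧
      (∑ b, ∑ a, c a * (starRingEnd ℂ) (c b) *
        (phi A B C (Pi.single b 1) (Pi.single a 1) - phi A B C 0 (Pi.single a 1)
          - phi A B C (Pi.single b 1) 0)).im = 0 := by
  set e : Fin n → (Fin n → ℝ) := fun a => Pi.single a 1 with he
  set L := ∑ b, ∑ a, c a * (starRingEnd ℂ) (c b) *
      (phi A B C (e b) (e a) - phi A B C 0 (e a) - phi A B C (e b) 0) with hL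
  set G : ℝ → ℂ := fun h => ((h^2)⁻¹ : ℝ) • ∑ b, ∑ a, c a * (starRingEnd ℂ) (c b) *
      (theta A B C (h • e b) (h • e a) - theta A B C 0 (h • e a)
        - theta A B C (h • e b) 0 + theta A B C 0 0) with hG
  have hstep : ∀ h : ℝ, 0 < h → 0 ≤ (G h).re ∧ (G h).im = 0 := by
    intro h hh
    have hp := pointwise_psd (theta A B C) (theta_cont A B C)
      (theta_bound B hA.posSemidef hC.posSemidef) hker
      (Fin.cons 0 (fun a => h • e a)) (Fin.cons (-∑ i, c i) c)
    rw [cons_form (theta A B C) 0 (fun a => h • e a) c] at hp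
    simp only [hG]
    constructor
    · simp only [Complex.real_smul, Complex.re_ofReal_mul]
      exact mul_nonneg (by positivity) hp.1
    · simp only [Complex.real_smul, Complex.im_ofReal_mul, hp.2, mul_zero]
  have heq : ∀ h : ℝ, G h = ∑ b, ∑ a, c a * (starRingEnd ℂ) (c b) *
      ((((h^2)⁻¹ : ℝ) • (Complex.exp (((h^2:ℝ):ℂ) * phi A B C (e b) (e a)) - 1))
        - (((h^2)⁻¹ : ℝ) • (Complex.exp (((h^2:ℝ):ℂ) * phi A B C 0 (e a)) - 1))
        - (((h^2)⁻¹ : ℝ) • (Complex.exp (((h^2:ℝ):ℂ) * phi A B C (e b) 0) - 1))) := by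
    intro h
    simp only [hG]
    rw [Finset.smul_sum]
    refine Finset.sum_congr rfl fun b _ => ?_
    rw [Finset.smul_sum]
    refine Finset.sum_congr rfl fun a _ => ?_
    rw [← mul_smul_comm]
    congr 1
    have e1 : theta A B C (h • e b) (h • e a)
        = Complex.exp (((h^2:ℝ):ℂ) * phi A B C (e b) (e a)) := theta_smul A B C h (e b) (e a)
    have e2 : theta A B C 0 (h • e a)
        = Complex.exp (((h^2:ℝ):ℂ) * phi A B C 0 (e a)) := by
      have := theta_smul A B C h 0 (e a)
      rwa [smul_zero] at this
    have e3 : theta A B C (h • e b) 0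
        = Complex.exp (((h^2:ℝ):ℂ) * phi A B C (e b) 0) := by
      have := theta_smul A B C h (e b) 0
      rwa [smul_zero] at this
    rw [e1, e2, e3, theta_zero]
    rw [show Complex.exp (((h^2:ℝ):ℂ) * phi A B C (e b) (e a))
          - Complex.exp (((h^2:ℝ):ℂ) * phi A B C 0 (e a))
          - Complex.exp (((h^2:ℝ):ℂ) * phi A B C (e b) 0) + 1
        = (Complex.exp (((h^2:ℝ):ℂ) * phi A B C (e b) (e a)) - 1)
          - (Complex.exp (((h^2:ℝ):ℂ) * phi A B C 0 (e a)) - 1)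
          - (Complex.exp (((h^2:ℝ):ℂ) * phi A B C (e b) 0) - 1) by ring]
    rw [smul_sub, smul_sub]
  have hGlim : Tendsto G (nhdsWithin 0 (Set.Ioi 0)) (nhds L) := by
    rw [show G = fun h => ∑ b, ∑ a, c a * (starRingEnd ℂ) (c b) *
      ((((h^2)⁻¹ : ℝ) • (Complex.exp (((h^2:ℝ):ℂ) * phi A B C (e b) (e a)) - 1))
        - (((h^2)⁻¹ : ℝ) • (Complex.exp (((h^2:ℝ):ℂ) * phi A B C 0 (e a)) - 1))
        - (((h^2)⁻¹ : ℝ) • (Complex.exp (((h^2:ℝ):ℂ) * phi A B C (e b) 0) - 1)))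
      from funext heq]
    rw [hL]
    apply tendsto_finset_sum
    intro b _
    apply tendsto_finset_sum
    intro a _
    exact (((tend_exp (phi A B C (e b) (e a))).sub (tend_exp (phi A B C 0 (e a)))).sub
      (tend_exp (phi A B C (e b) 0))).const_mul _
  have hre : Tendsto (fun h => (G h).re) (nhdsWithin 0 (Set.Ioi 0)) (nhds L.re) :=
    (Complex.continuous_re.tendsto L).comp hGlim
  have him : Tendsto (fun h => (G h).im) (nhdsWithin 0 (Set.Ioi 0)) (nhds L.im) :=
    (Complex.continuous_im.tendsto L).comp hGlim
  constructor
  · refine ge_of_tendsto hre ?_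
    filter_upwards [self_mem_nhdsWithin] with h hh
    exact (hstep h hh).1
  · refine (tendsto_nhds_unique ?_ him).symm
    apply Tendsto.congr' ?_ tendsto_const_nhds
    filter_upwards [self_mem_nhdsWithin] with h hh
    exact ((hstep h hh).2).symm

theorem prec_equivalence_characterization
    {n : ℕ} (hn : 1 ≤ n) (A₀ B₀ C₀ A₁ B₁ C₁ : Matrix (Fin n) (Fin n) ℝ)
    (hA₀ : A₀.IsSymm) (hC₀ : C₀.IsSymm) (hA₁ : A₁.IsSymm) (hC₁ : C₁.IsSymm) :
    (Prec A₀ B₀ C₀ A₁ B₁ C₁ ∧ Prec A₁ B₁ C₁ A₀ B₀ C₀) ↔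
      (A₁ - C₁ = A₀ - C₀ ∧ (B₁ - B₀).IsSymm) := by
  constructor
  · rintro ⟨⟨r, hr0, hPA1, hPC1, hk1⟩, ⟨s, hs0, hPA2, hPC2, hk2⟩⟩
    set M1 : Fin n → Fin n → ℂ := fun b a =>
      (((A₁ - A₀) a b + (A₁ - A₀) b a - (C₁ - C₀) a b - (C₁ - C₀) b a : ℝ) : ℂ)
        - Complex.I * (((B₁ - B₀) b a - (B₁ - B₀) a b : ℝ) : ℂ) with hM1
    have hent1 : ∀ b a, phi (A₁ - A₀ + r • 1) (B₁ - B₀) (C₁ - C₀ + r • 1)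
          (Pi.single b 1) (Pi.single a 1)
        - phi (A₁ - A₀ + r • 1) (B₁ - B₀) (C₁ - C₀ + r • 1) 0 (Pi.single a 1)
        - phi (A₁ - A₀ + r • 1) (B₁ - B₀) (C₁ - C₀ + r • 1) (Pi.single b 1) 0 = M1 b a := by
      intro b a
      rw [Mm_entry, hM1]
      simp only [Matrix.add_apply, Matrix.smul_apply, smul_eq_mul]
      push_cast
      ring
    have hent2 : ∀ b a, phi (A₀ - A₁ + s • 1) (B₀ - B₁) (C₀ - C₁ + s • 1)
          (Pi.single b 1) (Pi.single a 1)
        - phi (A₀ - A₁ + s • 1) (B₀ - B₁) (C₀ - C₁ + s • 1) 0 (Pi.single a 1)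
        - phi (A₀ - A₁ + s • 1) (B₀ - B₁) (C₀ - C₁ + s • 1) (Pi.single b 1) 0 = -M1 b a := by
      intro b a
      rw [Mm_entry, hM1]
      simp only [Matrix.add_apply, Matrix.sub_apply, Matrix.smul_apply, smul_eq_mul]
      push_cast
      ring
    have key : ∀ c : Fin n → ℂ, ∑ b, ∑ a, c a * (starRingEnd ℂ) (c b) * M1 b a = 0 := by
      intro c
      have P1 := form_psd _ _ _ hPA1 hPC1 hk1 c
      have P2 := form_psd _ _ _ hPA2 hPC2 hk2 c
      simp only [hent1] at P1
      simp only [hent2] at P2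
      have hneg : (∑ b, ∑ a, c a * (starRingEnd ℂ) (c b) * (-M1 b a))
          = -∑ b, ∑ a, c a * (starRingEnd ℂ) (c b) * M1 b a := by
        simp [Finset.sum_neg_distrib, mul_neg]
      rw [hneg] at P2
      rw [Complex.ext_iff]
      constructor
      · have h2 : (-∑ b, ∑ a, c a * (starRingEnd ℂ) (c b) * M1 b a).re
            = -(∑ b, ∑ a, c a * (starRingEnd ℂ) (c b) * M1 b a).re := by simp
        rw [h2] at P2
        simp only [Complex.zero_re]
        linarith [P1.1, P2.1]
      · simpa using P1.2
    have entries := form_zero_entries M1 key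
    constructor
    · apply Matrix.ext
      intro i j
      have h0 := entries j i
      rw [hM1, Complex.ext_iff] at h0
      simp only [Complex.sub_re, Complex.ofReal_re, Complex.mul_re, Complex.I_re,
        Complex.ofReal_im, Complex.I_im, Complex.zero_re, Complex.zero_im,
        zero_mul, one_mul, mul_zero, sub_zero, zero_sub, neg_eq_zero] at h0
      have hre := h0.1
      have hsymA : (A₁ - A₀) i j = (A₁ - A₀) j i := by
        have h1 : A₁ j i = A₁ i j := by rw [← hA₁.apply i j]
        have h2 : A₀ j i = A₀ i j := by rw [← hA₀.apply i j]
        simp [Matrix.sub_apply, h1, h2]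
      have hsymC : (C₁ - C₀) i j = (C₁ - C₀) j i := by
        have h1 : C₁ j i = C₁ i j := by rw [← hC₁.apply i j]
        have h2 : C₀ j i = C₀ i j := by rw [← hC₀.apply i j]
        simp [Matrix.sub_apply, h1, h2]
      simp only [Matrix.sub_apply] at hre hsymA hsymC ⊢
      linarith
    · rw [Matrix.IsSymm]
      apply Matrix.ext
      intro i j
      have h0 := entries i j
      rw [hM1, Complex.ext_iff] at h0
      simp only [Complex.sub_re, Complex.sub_im, Complex.ofReal_re, Complex.ofReal_im,
        Complex.mul_re, Complex.mul_im, Complex.I_re, Complex.I_im, Complex.zero_re,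
        Complex.zero_im, zero_mul, one_mul, mul_zero, sub_zero, zero_sub, zero_add,
        neg_eq_zero] at h0
      have him := h0.2
      rw [Matrix.transpose_apply]
      simp only [Matrix.sub_apply] at him ⊢
      linarith
  · rintro ⟨hAC, hBsym⟩
    have hCC : C₁ - C₀ = A₁ - A₀ := by
      apply Matrix.ext
      intro i j
      have := congrFun (congrFun hAC i) j
      simp only [Matrix.sub_apply] at this ⊢
      linarith
    have hDsym : (A₁ - A₀).IsSymm := hA₁.sub hA₀
    have hDsym' : (A₀ - A₁).IsSymm := hA₀.sub hA₁
    have hBsym' : (B₀ - B₁).IsSymm := by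
      rw [Matrix.IsSymm] at hBsym ⊢
      rw [(neg_sub B₁ B₀).symm, Matrix.transpose_neg, hBsym]
    have mk : ∀ (D S : Matrix (Fin n) (Fin n) ℝ), D.IsSymm → S.IsSymm →
        ∃ t : ℝ, 0 ≤ t ∧ GplusMem (D + t • 1) S (D + t • 1) := by
      intro D S hD hS
      have hsum : (0:ℝ) ≤ ∑ i, ∑ j, |D i j| := by
        apply Finset.sum_nonneg
        intro i _
        apply Finset.sum_nonneg
        intro j _
        exact abs_nonneg (D i j)
      refine ⟨1 + ∑ i, ∑ j, |D i j|, ?_, ?_, ?_, ?_⟩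
      · linarith
      · exact posdef_add_big D hD _ (by linarith)
      · exact posdef_add_big D hD _ (by linarith)
      · have hfact : theta (D + (1 + ∑ i, ∑ j, |D i j|) • 1) S (D + (1 + ∑ i, ∑ j, |D i j|) • 1)
            = fun x y => gfun (D + (1 + ∑ i, ∑ j, |D i j|) • 1) S x
                * (starRingEnd ℂ) (gfun (D + (1 + ∑ i, ∑ j, |D i j|) • 1) S y) := by
          funext x y
          exact theta_factor _ S hS x y
        rw [hfact]
        exact rankone_pos _
    constructor
    · obtain ⟨t, ht, hG⟩ := mk (A₁ - A₀) (B₁ - B₀) hDsym hBsym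
      exact ⟨t, ht, by rwa [hCC]⟩
    · obtain ⟨t, ht, hG⟩ := mk (A₀ - A₁) (B₀ - B₁) hDsym' hBsym'
      have hCC' : C₀ - C₁ = A₀ - A₁ := by
        apply Matrix.ext
        intro i j
        have := congrFun (congrFun hCC i) j
        simp only [Matrix.sub_apply] at this ⊢
        linarith
      exact ⟨t, ht, by rwa [hCC']⟩
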